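/- Let S = k[x₀,x₁,x₂,…,x_n], let I ⊆ S be a squarefree monomial ideal, and let J ⊆ S be its Alexander dual. Let S₁ = k[x,x₂,…,x_n] and π : S → S₁ the ring map with x₀,x₁ ↦ x and x_i ↦ x_i for i ≥ 2; let I₁, J₁ ⊆ S₁ be the ideals generated by π(I), π(J) respectively. If x₁ − x₀ is a regular element (nonzerodivisor) on S/I and I₁ is a squarefree monomial ideal, then J₁ is the Alexander dual of I₁; explicitly, a monomial m of S₁ lies in J₁ if and only if m has a nontrivial common divisor with every monomial of I₁. -/

import Mathlib

open MvPolynomial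

lemma mem_support_mapDomain' {α β : Type*} (f : α → β) (x : α →₀ ℕ) {v : α}
    (hv : v ∈ x.support) : f v ∈ (Finsupp.mapDomain f x).support := by
  rw [Finsupp.mem_support_iff]
  have hle : x v ≤ Finsupp.mapDomain f x (f v) := by
    rw [Finsupp.mapDomain, Finsupp.sum_apply, Finsupp.sum]
    have h : x v = (Finsupp.single (f v) (x v)) (f v) := by simp
    rw [h]
    exact Finset.single_le_sum (f := fun u => (Finsupp.single (f u) (x u)) (f v))
      (fun i _ => Nat.zero_le _) hv
  have hx : x v ≠ 0 := Finsupp.mem_support_iff.mp hv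
  omega

lemma support_mapDomain_sub {α β : Type*} [DecidableEq β] (f : α → β) (x : α →₀ ℕ) {w : β}
    (hw : w ∈ (Finsupp.mapDomain f x).support) : ∃ v ∈ x.support, f v = w := by
  have := Finsupp.mapDomain_support hw
  simpa using Finset.mem_image.mp this

theorem alexander_duality_descends
    (k : Type*) [Field k] (n : ℕ) (hn : 1 ≤ n)
    (I : Ideal (MvPolynomial (Fin (n + 1)) k))
    (hIsqfree : ∃ G : Set (Fin (n + 1) →₀ ℕ), (∀ d ∈ G, ∀ v, d v ≤ 1) ∧
      I = Ideal.span ((fun d => monomial d (1 : k)) '' G))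
    (J : Ideal (MvPolynomial (Fin (n + 1)) k))
    (hJ : J = Ideal.span { m : MvPolynomial (Fin (n + 1)) k |
      ∃ d : Fin (n + 1) →₀ ℕ,
        (∀ e : Fin (n + 1) →₀ ℕ, monomial e (1 : k) ∈ I →
          ∃ v, v ∈ d.support ∧ v ∈ e.support) ∧
        m = monomial d (1 : k) })
    (g : Fin (n + 1) → Fin n)
    (hg : ∀ i : Fin (n + 1), (g i : ℕ) = if (i : ℕ) ≤ 1 then 0 else (i : ℕ) - 1)
    (hreg : ∀ f : MvPolynomial (Fin (n + 1)) k, (X 1 - X 0) * f ∈ I → f ∈ I)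
    (hI₁sqfree : ∃ G₁ : Set (Fin n →₀ ℕ), (∀ d ∈ G₁, ∀ v, d v ≤ 1) ∧
      Ideal.map (rename g) I = Ideal.span ((fun d => monomial d (1 : k)) '' G₁)) :
    ∀ d : Fin n →₀ ℕ,
      monomial d (1 : k) ∈ Ideal.map (rename g) J ↔
        ∀ e : Fin n →₀ ℕ, monomial e (1 : k) ∈ Ideal.map (rename g) I →
          ∃ v, v ∈ d.support ∧ v ∈ e.support := by
  haveI : NeZero n := ⟨by omega⟩
  obtain ⟨G, hGsq, hGI⟩ := hIsqfree
  -- basic facts about g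
  have hval1 : ((1 : Fin (n + 1)) : ℕ) = 1 := by
    rw [Fin.val_one']; exact Nat.mod_eq_of_lt (by omega)
  have hg0 : g 0 = 0 := by
    apply Fin.val_injective; rw [hg]; simp
  have hg1 : g 1 = 0 := by
    apply Fin.val_injective; rw [hg, hval1]; simp
  have hgs : ∀ w : Fin n, g (Fin.succ w) = w := by
    intro w
    apply Fin.val_injective
    rw [hg, Fin.val_succ]
    rcases Nat.eq_zero_or_pos (w : ℕ) with h | h <;> split_ifs <;> omega
  have hgsid : g ∘ Fin.succ = id := funext hgs
  have hval : ∀ v : Fin (n + 1), v ≠ 0 → v ≠ 1 → 2 ≤ (v : ℕ) := by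
    intro v h0 h1
    have e0 : (v : ℕ) ≠ 0 := fun h => h0 (Fin.val_injective (by simpa using h))
    have e1 : (v : ℕ) ≠ 1 := fun h => h1 (Fin.val_injective (by rw [hval1]; exact h))
    omega
  have hvsucc : ∀ v : Fin (n + 1), v ≠ 0 → v ≠ 1 → v = Fin.succ (g v) := by
    intro v h0 h1
    have h2 := hval v h0 h1
    apply Fin.val_injective
    rw [Fin.val_succ, hg, if_neg (by omega)]
    omega
  have hgne : ∀ v : Fin (n + 1), v ≠ 0 → v ≠ 1 → g v ≠ 0 := by
    intro v h0 h1 h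
    have h2 := hval v h0 h1
    have h3 : ((g v : Fin n) : ℕ) = (v : ℕ) - 1 := by rw [hg, if_neg (by omega)]
    have h4 : ((g v : Fin n) : ℕ) = 0 := by rw [h]; simp
    omega
  -- membership characterizations
  have memI : ∀ e, monomial e (1 : k) ∈ I ↔ ∃ a ∈ G, a ≤ e := by
    intro e
    rw [hGI, mem_ideal_span_monomial_image]
    simp [support_monomial]
  have monG : ∀ a ∈ G, monomial a (1 : k) ∈ I := fun a ha => (memI a).2 ⟨a, ha, le_refl a⟩
  have himg : ∀ T : Set (Fin (n + 1) →₀ ℕ),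
      Ideal.map (rename g) (Ideal.span ((fun c => monomial c (1 : k)) '' T)) =
        Ideal.span ((fun c => monomial c (1 : k)) '' (Finsupp.mapDomain g '' T)) := by
    intro T
    rw [Ideal.map_span]
    congr 1
    rw [Set.image_image, Set.image_image]
    exact Set.image_congr' (fun a => rename_monomial g a 1)
  have memMapI : ∀ e : Fin n →₀ ℕ, monomial e (1 : k) ∈ Ideal.map (rename g) I ↔
      ∃ a ∈ G, Finsupp.mapDomain g a ≤ e := by
    intro e
    rw [hGI, himg, mem_ideal_span_monomial_image]
    simp [support_monomial]
  set P : (Fin (n + 1) →₀ ℕ) → Prop := fun c =>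
    ∀ e, monomial e (1 : k) ∈ I → ∃ v, v ∈ c.support ∧ v ∈ e.support with hPdef
  have hJ' : J = Ideal.span ((fun c => monomial c (1 : k)) '' {c | P c}) := by
    rw [hJ]
    congr 1
    ext m
    simp only [Set.mem_setOf_eq, Set.mem_image]
    constructor
    · rintro ⟨c, hc, rfl⟩; exact ⟨c, hc, rfl⟩
    · rintro ⟨c, hc, rfl⟩; exact ⟨c, hc, rfl⟩
  have memMapJ : ∀ d : Fin n →₀ ℕ, monomial d (1 : k) ∈ Ideal.map (rename g) J ↔
      ∃ c, P c ∧ Finsupp.mapDomain g c ≤ d := by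
    intro d
    rw [hJ', himg, mem_ideal_span_monomial_image]
    simp [support_monomial]
  -- the key regularity lemma
  have key : ∀ p q : Fin (n + 1) →₀ ℕ,
      monomial (Finsupp.single 0 1 + p) (1 : k) ∈ I →
      monomial (Finsupp.single 1 1 + q) (1 : k) ∈ I →
      monomial (p + q) (1 : k) ∈ I := by
    intro p q hp hq
    apply hreg
    have hX : ∀ i : Fin (n + 1), (X i : MvPolynomial (Fin (n + 1)) k) =
        monomial (Finsupp.single i 1) 1 := fun i => rfl
    have h1 : (X 1 : MvPolynomial (Fin (n + 1)) k) * monomial (p + q) 1 =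
        monomial (Finsupp.single 1 1 + q) 1 * monomial p 1 := by
      rw [hX, monomial_mul, monomial_mul, one_mul]
      congr 1
      rw [add_comm p q, ← add_assoc]
    have h0 : (X 0 : MvPolynomial (Fin (n + 1)) k) * monomial (p + q) 1 =
        monomial (Finsupp.single 0 1 + p) 1 * monomial q 1 := by
      rw [hX, monomial_mul, monomial_mul, one_mul]
      congr 1
      rw [← add_assoc]
    rw [sub_mul, h1, h0]
    exact I.sub_mem (I.mul_mem_right _ hq) (I.mul_mem_right _ hp)
  intro d
  rw [memMapJ]
  constructor
  · rintro ⟨c, hPc, hcd⟩ e he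
    obtain ⟨a, haG, hae⟩ := (memMapI e).1 he
    obtain ⟨v, hvc, hva⟩ := hPc a (monG a haG)
    refine ⟨g v, ?_, ?_⟩
    · have h1 := Finsupp.mem_support_iff.mp (mem_support_mapDomain' g c hvc)
      have h2 := hcd (g v)
      rw [Finsupp.mem_support_iff]
      omega
    · have h1 := Finsupp.mem_support_iff.mp (mem_support_mapDomain' g a hva)
      have h2 := hae (g v)
      rw [Finsupp.mem_support_iff]
      omega
  · intro hR
    have build : ∀ i : Fin (n + 1), g i = 0 →
        (∀ a ∈ G, ∃ v, v ∈ a.support ∧ g v ∈ d.support ∧ (v = i ∨ (v ≠ 0 ∧ v ≠ 1))) →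
        ∃ c, P c ∧ Finsupp.mapDomain g c ≤ d := by
      intro i hgi hw
      set c := Finsupp.single i (d 0) + Finsupp.mapDomain Fin.succ (d.erase 0) with hc
      have hmap : Finsupp.mapDomain g c = d := by
        rw [hc, Finsupp.mapDomain_add, Finsupp.mapDomain_single, hgi,
          ← Finsupp.mapDomain_comp, hgsid, Finsupp.mapDomain_id, Finsupp.single_add_erase]
      have hsupp : ∀ v, g v ∈ d.support → (v = i ∨ (v ≠ 0 ∧ v ≠ 1)) → v ∈ c.support := by
        intro v hgv hv
        rw [Finsupp.mem_support_iff, hc, Finsupp.add_apply]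
        rcases hv with rfl | ⟨h0, h1⟩
        · rw [hgi] at hgv
          have hd0 : d 0 ≠ 0 := Finsupp.mem_support_iff.mp hgv
          have hs : Finsupp.single v (d 0) v = d 0 := Finsupp.single_eq_same
          omega
        · have hv' : v = Fin.succ (g v) := hvsucc v h0 h1
          have hm : Finsupp.mapDomain Fin.succ (d.erase 0) v = (d.erase 0) (g v) := by
            conv_lhs => rw [hv']
            exact Finsupp.mapDomain_apply (Fin.succ_injective n) _ _
          have he : (d.erase 0) (g v) = d (g v) := Finsupp.erase_ne (hgne v h0 h1)
          have hd : d (g v) ≠ 0 := Finsupp.mem_support_iff.mp hgv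
          omega
      refine ⟨c, ?_, le_of_eq hmap⟩
      intro e he
      obtain ⟨a, haG, hae⟩ := (memI e).1 he
      obtain ⟨v, hva, hgv, hvi⟩ := hw a haG
      refine ⟨v, hsupp v hgv hvi, ?_⟩
      have h1 := Finsupp.mem_support_iff.mp hva
      have h2 := hae v
      rw [Finsupp.mem_support_iff]
      omega
    -- for each a ∈ G there is a witness in the support of a hitting d
    have hwit : ∀ a ∈ G, ∃ v, v ∈ a.support ∧ g v ∈ d.support := by
      intro a haG
      have hma : monomial (Finsupp.mapDomain g a) (1 : k) ∈ Ideal.map (rename g) I := by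
        have := Ideal.mem_map_of_mem (rename g) (monG a haG)
        rwa [rename_monomial] at this
      obtain ⟨w, hwd, hwe⟩ := hR _ hma
      obtain ⟨v, hva, hvw⟩ := support_mapDomain_sub g a hwe
      exact ⟨v, hva, hvw ▸ hwd⟩
    by_cases h1 : ∀ a ∈ G, ∃ v, v ∈ a.support ∧ v ≠ 0 ∧ g v ∈ d.support
    · apply build 1 hg1
      intro a haG
      obtain ⟨v, hva, hv0, hgv⟩ := h1 a haG
      by_cases hv1 : v = 1
      · exact ⟨v, hva, hgv, Or.inl hv1⟩
      · exact ⟨v, hva, hgv, Or.inr ⟨hv0, hv1⟩⟩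
    by_cases h2 : ∀ a ∈ G, ∃ v, v ∈ a.support ∧ v ≠ 1 ∧ g v ∈ d.support
    · apply build 0 hg0
      intro a haG
      obtain ⟨v, hva, hv1, hgv⟩ := h2 a haG
      by_cases hv0 : v = 0
      · exact ⟨v, hva, hgv, Or.inl hv0⟩
      · exact ⟨v, hva, hgv, Or.inr ⟨hv0, hv1⟩⟩
    · exfalso
      push_neg at h1 h2
      obtain ⟨a, haG, ha⟩ := h1
      obtain ⟨b, hbG, hb⟩ := h2
      -- a only hits d through variable 0, b only through variable 1
      have ha0 : 0 ∈ a.support := by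
        obtain ⟨v, hva, hgv⟩ := hwit a haG
        by_cases hv : v = 0
        · exact hv ▸ hva
        · exact absurd hgv (ha v hva hv)
      have hb1 : 1 ∈ b.support := by
        obtain ⟨v, hvb, hgv⟩ := hwit b hbG
        by_cases hv : v = 1
        · exact hv ▸ hvb
        · exact absurd hgv (hb v hvb hv)
      have ha01 : a 0 = 1 := by
        have := hGsq a haG 0
        have := Finsupp.mem_support_iff.mp ha0
        omega
      have hb11 : b 1 = 1 := by
        have := hGsq b hbG 1
        have := Finsupp.mem_support_iff.mp hb1
        omega
      have hpa : Finsupp.single 0 1 + a.erase 0 = a := by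
        conv_rhs => rw [← Finsupp.single_add_erase 0 a]
        rw [ha01]
      have hqb : Finsupp.single 1 1 + b.erase 1 = b := by
        conv_rhs => rw [← Finsupp.single_add_erase 1 b]
        rw [hb11]
      have hpq : monomial (a.erase 0 + b.erase 1) (1 : k) ∈ I := by
        apply key
        · rw [hpa]; exact monG a haG
        · rw [hqb]; exact monG b hbG
      have hmem : monomial (Finsupp.mapDomain g (a.erase 0 + b.erase 1)) (1 : k) ∈
          Ideal.map (rename g) I := by
        have := Ideal.mem_map_of_mem (rename g) hpq
        rwa [rename_monomial] at this
      obtain ⟨w, hwd, hwe⟩ := hR _ hmem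
      obtain ⟨v, hvpq, hvw⟩ := support_mapDomain_sub g _ hwe
      have hvun := Finsupp.support_add hvpq
      rw [Finset.mem_union, Finsupp.support_erase, Finsupp.support_erase] at hvun
      rcases hvun with hv | hv
      · rw [Finset.mem_erase] at hv
        exact ha v hv.2 hv.1 (hvw ▸ hwd)
      · rw [Finset.mem_erase] at hv
        exact hb v hv.2 hv.1 (hvw ▸ hwd)
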